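/- Let H and V be real Hilbert spaces, A : H → H and B : V → V bounded self-adjoint coercive operators with B bijective with bounded inverse B⁻¹, R : V → H a surjective bounded linear operator with adjoint R*, and D : H → V the B-weighted pseudoinverse of R. Then the extremal Rayleigh quotients of the preconditioned operator in the A-inner product are given by the pseudoinverse: inf over u ∈ H, u ≠ 0, of (R B⁻¹ R* A u, u)_A / (u,u)_A equals inf over u ≠ 0 of (A u, u)_H / (B (D u), D u)_V, and sup over u ≠ 0 of (R B⁻¹ R* A u, u)_A / (u,u)_A equals sup over u ≠ 0 of (A u, u)_H / (B (D u), D u)_V. In particular, the optimal constants c₋, c₊ in the fictitious space lemma give optimal bounds in its spectral estimate. -/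

import Mathlib

open RealInnerProductSpace

section AuxCS

variable {E : Type*} [NormedAddCommGroup E] [InnerProductSpace ℝ E]

/-- Cauchy–Schwarz for a positive symmetric bounded operator. -/
lemma aux_cs_op (T : E →L[ℝ] E) (hsa : ∀ x y : E, ⟪T x, y⟫ = ⟪x, T y⟫)
    (hpos : ∀ x : E, 0 ≤ ⟪T x, x⟫) (u v : E) :
    ⟪T u, v⟫ ^ 2 ≤ ⟪T u, u⟫ * ⟪T v, v⟫ := by
  have hsym : ∀ x y : E, ⟪T x, y⟫ = ⟪T y, x⟫ := fun x y => by
    rw [hsa, real_inner_comm]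
  have key : ∀ t : ℝ, 0 ≤ ⟪T v, v⟫ * (t * t) + (2 * ⟪T u, v⟫) * t + ⟪T u, u⟫ := by
    intro t
    have h0 := hpos (u + t • v)
    have hexp : ⟪T (u + t • v), u + t • v⟫
        = ⟪T v, v⟫ * (t * t) + (2 * ⟪T u, v⟫) * t + ⟪T u, u⟫ := by
      rw [map_add, map_smul]
      simp only [inner_add_left, inner_add_right, real_inner_smul_left, real_inner_smul_right]
      rw [hsym v u]
      ring
    rw [hexp] at h0
    exact h0
  have hd := discrim_le_zero key
  rw [discrim] at hd
  nlinarith [hd]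

end AuxCS

set_option maxHeartbeats 2000000 in
/-- With `H`, `V` real Hilbert spaces, `A : H → H` and `B : V → V` bounded
self-adjoint coercive operators, `B'` the bounded inverse of `B`, `R : V → H` surjective
bounded linear, and `D : H → V` the `B`-weighted pseudoinverse of `R`, the extremal
Rayleigh quotients of the preconditioned operator `R B⁻¹ R* A` in the `A`-inner product
are expressed via the pseudoinverse:
`inf_{u ≠ 0} (R B⁻¹ R* A u, u)_A / (u,u)_A = inf_{u ≠ 0} (A u, u)_H / (B (D u), D u)_V`,
and similarly for the supremum; hence optimal constants in the fictitious space lemma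
give optimal spectral bounds. -/
theorem statement10
    {V H : Type*} [NormedAddCommGroup V] [InnerProductSpace ℝ V] [CompleteSpace V]
    [NormedAddCommGroup H] [InnerProductSpace ℝ H] [CompleteSpace H]
    (A : H →L[ℝ] H)
    (hAsa : ∀ u w : H, ⟪A u, w⟫ = ⟪u, A w⟫)
    (cA : ℝ) (hcA : 0 < cA) (hAcoer : ∀ u : H, cA * ‖u‖ ^ 2 ≤ ⟪A u, u⟫)
    (B : V →L[ℝ] V)
    (hBsa : ∀ x z : V, ⟪B x, z⟫ = ⟪x, B z⟫)
    (cB : ℝ) (hcB : 0 < cB) (hBcoer : ∀ x : V, cB * ‖x‖ ^ 2 ≤ ⟪B x, x⟫)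
    (B' : V →L[ℝ] V) (hB'l : ∀ x : V, B' (B x) = x) (hB'r : ∀ x : V, B (B' x) = x)
    (R : V →L[ℝ] H) (hR : Function.Surjective R)
    (D : H →L[ℝ] V)
    (hD1 : ∀ y : H, R (D y) = y)
    (hD2 : ∀ y : H, ∀ k ∈ LinearMap.ker (R : V →ₗ[ℝ] H), ⟪B (D y), k⟫ = 0) :
    sInf {t : ℝ | ∃ u : H, u ≠ 0 ∧
        t = ⟪A (R (B' (ContinuousLinearMap.adjoint R (A u)))), u⟫ / ⟪A u, u⟫} =
      sInf {t : ℝ | ∃ u : H, u ≠ 0 ∧ t = ⟪A u, u⟫ / ⟪B (D u), D u⟫} ∧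
    sSup {t : ℝ | ∃ u : H, u ≠ 0 ∧
        t = ⟪A (R (B' (ContinuousLinearMap.adjoint R (A u)))), u⟫ / ⟪A u, u⟫} =
      sSup {t : ℝ | ∃ u : H, u ≠ 0 ∧ t = ⟪A u, u⟫ / ⟪B (D u), D u⟫} := by
  set R' : H →L[ℝ] V := ContinuousLinearMap.adjoint R with hR'def
  -- positivity facts
  have hAnn : ∀ u : H, 0 ≤ ⟪A u, u⟫ := fun u =>
    le_trans (by positivity) (hAcoer u)
  have hBnn : ∀ x : V, 0 ≤ ⟪B x, x⟫ := fun x =>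
    le_trans (by positivity) (hBcoer x)
  have hApos : ∀ u : H, u ≠ 0 → 0 < ⟪A u, u⟫ := by
    intro u hu
    have h1 : 0 < ‖u‖ := norm_pos_iff.mpr hu
    nlinarith [hAcoer u, mul_pos hcA (pow_pos h1 2)]
  have hBpos : ∀ x : V, x ≠ 0 → 0 < ⟪B x, x⟫ := by
    intro x hx
    have h1 : 0 < ‖x‖ := norm_pos_iff.mpr hx
    nlinarith [hBcoer x, mul_pos hcB (pow_pos h1 2)]
  have hAne : ∀ u : H, u ≠ 0 → A u ≠ 0 := by
    intro u hu h
    have := hApos u hu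
    rw [h, inner_zero_left] at this
    exact lt_irrefl 0 this
  have hR'inj : ∀ y : H, R' y = 0 → y = 0 := by
    intro y hy
    have h1 : ⟪y, y⟫ = ⟪R' y, D y⟫ := by
      rw [hR'def, ContinuousLinearMap.adjoint_inner_left, hD1]
    rw [hy, inner_zero_left] at h1
    exact inner_self_eq_zero.mp h1
  have hDne : ∀ u : H, u ≠ 0 → D u ≠ 0 := by
    intro u hu h
    apply hu
    rw [← hD1 u, h, map_zero]
  have hDpos : ∀ u : H, u ≠ 0 → 0 < ⟪B (D u), D u⟫ := fun u hu => hBpos _ (hDne u hu)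
  -- the numerator of the first quotient as a B-quadratic form
  have hN1 : ∀ u : H, ⟪A (R (B' (R' (A u)))), u⟫
      = ⟪B (B' (R' (A u))), B' (R' (A u))⟫ := by
    intro u
    calc ⟪A (R (B' (R' (A u)))), u⟫ = ⟪R (B' (R' (A u))), A u⟫ := hAsa _ _
      _ = ⟪B' (R' (A u)), R' (A u)⟫ := by
          rw [hR'def, ← ContinuousLinearMap.adjoint_inner_right]
      _ = ⟪B' (R' (A u)), B (B' (R' (A u)))⟫ := by rw [hB'r]
      _ = ⟪B (B' (R' (A u))), B' (R' (A u))⟫ := real_inner_comm _ _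
  have hN1pos : ∀ u : H, u ≠ 0 → 0 < ⟪A (R (B' (R' (A u)))), u⟫ := by
    intro u hu
    rw [hN1 u]
    apply hBpos
    intro h
    have h2 : R' (A u) = 0 := by rw [← hB'r (R' (A u)), h, map_zero]
    exact hAne u hu (hR'inj _ h2)
  -- uniqueness of the weighted pseudoinverse
  have hDuniq : ∀ (y : H) (v : V), R v = y →
      (∀ k ∈ LinearMap.ker (R : V →ₗ[ℝ] H), ⟪B v, k⟫ = 0) → v = D y := by
    intro y v h1 h2
    have hk : v - D y ∈ LinearMap.ker (R : V →ₗ[ℝ] H) := by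
      rw [LinearMap.mem_ker]
      show R (v - D y) = 0
      rw [map_sub, h1, hD1, sub_self]
    have h3 : ⟪B (v - D y), v - D y⟫ = 0 := by
      rw [map_sub, inner_sub_left, h2 _ hk, hD2 y _ hk, sub_self]
    by_contra hne
    have h4 : v - D y ≠ 0 := sub_ne_zero.mpr hne
    exact (ne_of_gt (hBpos _ h4)) h3
  -- Cauchy–Schwarz for the two forms
  have hCSA := aux_cs_op A hAsa hAnn
  have hCSB := aux_cs_op B hBsa hBnn
  -- key pointwise inequality: q2(u) ≤ q1(u)
  have hle1 : ∀ u : H, u ≠ 0 →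
      ⟪A u, u⟫ / ⟪B (D u), D u⟫ ≤ ⟪A (R (B' (R' (A u)))), u⟫ / ⟪A u, u⟫ := by
    intro u hu
    set w : V := B' (R' (A u)) with hw
    have key : ⟪B w, D u⟫ = ⟪A u, u⟫ := by
      calc ⟪B w, D u⟫ = ⟪R' (A u), D u⟫ := by rw [hw, hB'r]
        _ = ⟪A u, R (D u)⟫ := by rw [hR'def, ContinuousLinearMap.adjoint_inner_left]
        _ = ⟪A u, u⟫ := by rw [hD1]
    have hcs := hCSB w (D u)
    rw [key] at hcs
    rw [hN1 u, div_le_div_iff₀ (hDpos u hu) (hApos u hu)]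
    nlinarith [hcs]
  -- q1(u) ≤ q2(v) for v = R(B'(R'(A u)))
  have hle2 : ∀ u : H, u ≠ 0 → ∃ v : H, v ≠ 0 ∧
      ⟪A (R (B' (R' (A u)))), u⟫ / ⟪A u, u⟫ ≤ ⟪A v, v⟫ / ⟪B (D v), D v⟫ := by
    intro u hu
    set w : V := B' (R' (A u)) with hw
    set v : H := R w with hv
    have hDv : w = D v := by
      apply hDuniq v w rfl
      intro k hk
      rw [hw, hB'r, hR'def, ContinuousLinearMap.adjoint_inner_left]
      rw [LinearMap.mem_ker] at hk
      rw [show R k = 0 from hk, inner_zero_right]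
    have ha : 0 < ⟪A v, u⟫ := hN1pos u hu
    have hvne : v ≠ 0 := by
      intro h
      rw [h, map_zero, inner_zero_left] at ha
      exact lt_irrefl 0 ha
    have hden : ⟪B (D v), D v⟫ = ⟪A v, u⟫ := by
      rw [← hDv]
      exact (hN1 u).symm
    have hcs := hCSA v u
    refine ⟨v, hvne, ?_⟩
    rw [hden, div_le_div_iff₀ (hApos u hu) ha]
    nlinarith [hcs]
  -- surjectivity of A
  have hAsurj : Function.Surjective A := by
    have hbilin : IsCoercive ((innerSL ℝ).comp A : H →L[ℝ] H →L[ℝ] ℝ) := by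
      refine ⟨cA, hcA, fun u => ?_⟩
      have := hAcoer u
      simp only [ContinuousLinearMap.comp_apply, innerSL_apply_apply]
      nlinarith [this]
    intro g
    obtain ⟨v, hv⟩ := hbilin.continuousLinearEquivOfBilin.surjective g
    refine ⟨v, ?_⟩
    have : A v = hbilin.continuousLinearEquivOfBilin v := by
      apply hbilin.unique_continuousLinearEquivOfBilin
      intro x
      simp [ContinuousLinearMap.comp_apply, innerSL_apply_apply]
    rw [this, hv]
  -- solvability of R' g = B (D u)
  have hRange : ∀ u : H, ∃ g : H, R' g = B (D u) := by
    intro u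
    set L : H →L[ℝ] ℝ := ((InnerProductSpace.toDual ℝ V) (B (D u))).comp D with hL
    refine ⟨(InnerProductSpace.toDual ℝ H).symm L, ?_⟩
    apply ext_inner_right ℝ
    intro x
    have h1 : ⟪R' ((InnerProductSpace.toDual ℝ H).symm L), x⟫
        = ⟪(InnerProductSpace.toDual ℝ H).symm L, R x⟫ := by
      rw [hR'def, ContinuousLinearMap.adjoint_inner_left]
    rw [h1, InnerProductSpace.toDual_symm_apply]
    have h2 : L (R x) = ⟪B (D u), D (R x)⟫ := by
      simp [hL, InnerProductSpace.toDual_apply_apply]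
    rw [h2]
    have hk : D (R x) - x ∈ LinearMap.ker (R : V →ₗ[ℝ] H) := by
      rw [LinearMap.mem_ker]
      show R (D (R x) - x) = 0
      rw [map_sub, hD1, sub_self]
    have h3 := hD2 u _ hk
    rw [inner_sub_right] at h3
    linarith [h3]
  -- for every u there exists v with q1(v) ≤ q2(u)
  have hle3 : ∀ u : H, u ≠ 0 → ∃ v : H, v ≠ 0 ∧
      ⟪A (R (B' (R' (A v)))), v⟫ / ⟪A v, v⟫ ≤ ⟪A u, u⟫ / ⟪B (D u), D u⟫ := by
    intro u hu
    obtain ⟨g, hg⟩ := hRange u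
    obtain ⟨v, hv⟩ := hAsurj g
    have hd : ⟪A v, u⟫ = ⟪B (D u), D u⟫ := by
      calc ⟪A v, u⟫ = ⟪g, u⟫ := by rw [hv]
        _ = ⟪g, R (D u)⟫ := by rw [hD1]
        _ = ⟪R' g, D u⟫ := by rw [hR'def, ContinuousLinearMap.adjoint_inner_left]
        _ = ⟪B (D u), D u⟫ := by rw [hg]
    have hdpos : 0 < ⟪A v, u⟫ := hd ▸ hDpos u hu
    have hvne : v ≠ 0 := by
      intro h
      rw [h, map_zero, inner_zero_left] at hdpos
      exact lt_irrefl 0 hdpos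
    have hnum : ⟪A (R (B' (R' (A v)))), v⟫ = ⟪B (D u), D u⟫ := by
      have hwv : B' (R' (A v)) = D u := by
        rw [hv, hg, hB'l]
      rw [hN1 v, hwv]
    refine ⟨v, hvne, ?_⟩
    rw [hnum, ← hd, div_le_div_iff₀ (hApos v hvne) hdpos]
    nlinarith [hCSA v u]
  -- uniform upper bound for q1
  set M : ℝ := (‖B'‖ * ((‖R'‖ * ‖A‖) * (‖R'‖ * ‖A‖))) / cA with hM
  have hq1le : ∀ u : H, u ≠ 0 → ⟪A (R (B' (R' (A u)))), u⟫ / ⟪A u, u⟫ ≤ M := by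
    intro u hu
    set w : V := B' (R' (A u)) with hw
    have e1 : ‖A u‖ ≤ ‖A‖ * ‖u‖ := A.le_opNorm u
    have e2 : ‖R' (A u)‖ ≤ ‖R'‖ * ‖A u‖ := R'.le_opNorm (A u)
    have e3 : ‖w‖ ≤ ‖B'‖ * ‖R' (A u)‖ := B'.le_opNorm (R' (A u))
    have e4 : ⟪B w, w⟫ ≤ ‖R' (A u)‖ * ‖w‖ := by
      have : B w = R' (A u) := by rw [hw, hB'r]
      rw [this]
      exact real_inner_le_norm _ _
    have nn0 : (0:ℝ) ≤ ‖u‖ := norm_nonneg u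
    have nn1 : (0:ℝ) ≤ ‖A‖ := norm_nonneg _
    have nn2 : (0:ℝ) ≤ ‖R'‖ := norm_nonneg _
    have nn3 : (0:ℝ) ≤ ‖B'‖ := norm_nonneg _
    have nn4 : (0:ℝ) ≤ ‖A u‖ := norm_nonneg _
    have nn5 : (0:ℝ) ≤ ‖R' (A u)‖ := norm_nonneg _
    have nn6 : (0:ℝ) ≤ ‖w‖ := norm_nonneg _
    have hnum : ⟪A (R (B' (R' (A u)))), u⟫
        ≤ (‖B'‖ * ((‖R'‖ * ‖A‖) * (‖R'‖ * ‖A‖))) * ‖u‖ ^ 2 := by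
      rw [hN1 u, ← hw]
      have h5 : ‖R' (A u)‖ ≤ ‖R'‖ * (‖A‖ * ‖u‖) := by nlinarith
      have h6 : ‖w‖ ≤ ‖B'‖ * (‖R'‖ * (‖A‖ * ‖u‖)) := by nlinarith
      calc ⟪B w, w⟫ ≤ ‖R' (A u)‖ * ‖w‖ := e4
        _ ≤ (‖R'‖ * (‖A‖ * ‖u‖)) * (‖B'‖ * (‖R'‖ * (‖A‖ * ‖u‖))) :=
            mul_le_mul h5 h6 nn6 (by positivity)
        _ = (‖B'‖ * ((‖R'‖ * ‖A‖) * (‖R'‖ * ‖A‖))) * ‖u‖ ^ 2 := by ring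
    have hden := hAcoer u
    have hC : (0:ℝ) ≤ ‖B'‖ * ((‖R'‖ * ‖A‖) * (‖R'‖ * ‖A‖)) := by positivity
    rw [hM, div_le_div_iff₀ (hApos u hu) hcA]
    nlinarith [mul_le_mul_of_nonneg_right hnum (le_of_lt hcA),
      mul_le_mul_of_nonneg_left hden hC]
  constructor
  all_goals {
    by_cases hex : ∃ u : H, u ≠ 0
    case neg =>
      have hS1 : {t : ℝ | ∃ u : H, u ≠ 0 ∧
          t = ⟪A (R (B' (R' (A u)))), u⟫ / ⟪A u, u⟫} = (∅ : Set ℝ) := by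
        ext t; simp only [Set.mem_setOf_eq, Set.mem_empty_iff_false, iff_false]
        rintro ⟨u, hu, -⟩; exact hex ⟨u, hu⟩
      have hS2 : {t : ℝ | ∃ u : H, u ≠ 0 ∧ t = ⟪A u, u⟫ / ⟪B (D u), D u⟫} = (∅ : Set ℝ) := by
        ext t; simp only [Set.mem_setOf_eq, Set.mem_empty_iff_false, iff_false]
        rintro ⟨u, hu, -⟩; exact hex ⟨u, hu⟩
      rw [hS1, hS2]
    case pos =>
      obtain ⟨u0, hu0⟩ := hex
      have hne1 : ({t : ℝ | ∃ u : H, u ≠ 0 ∧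
          t = ⟪A (R (B' (R' (A u)))), u⟫ / ⟪A u, u⟫}).Nonempty :=
        ⟨_, u0, hu0, rfl⟩
      have hne2 : ({t : ℝ | ∃ u : H, u ≠ 0 ∧ t = ⟪A u, u⟫ / ⟪B (D u), D u⟫}).Nonempty :=
        ⟨_, u0, hu0, rfl⟩
      have hbdd1b : BddBelow {t : ℝ | ∃ u : H, u ≠ 0 ∧
          t = ⟪A (R (B' (R' (A u)))), u⟫ / ⟪A u, u⟫} := by
        refine ⟨0, ?_⟩
        rintro t ⟨u, hu, rfl⟩
        exact div_nonneg (le_of_lt (hN1pos u hu)) (hAnn u)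
      have hbdd2b : BddBelow {t : ℝ | ∃ u : H, u ≠ 0 ∧ t = ⟪A u, u⟫ / ⟪B (D u), D u⟫} := by
        refine ⟨0, ?_⟩
        rintro t ⟨u, hu, rfl⟩
        exact div_nonneg (hAnn u) (le_of_lt (hDpos u hu))
      have hbdd1a : BddAbove {t : ℝ | ∃ u : H, u ≠ 0 ∧
          t = ⟪A (R (B' (R' (A u)))), u⟫ / ⟪A u, u⟫} := by
        refine ⟨M, ?_⟩
        rintro t ⟨u, hu, rfl⟩
        exact hq1le u hu
      have hbdd2a : BddAbove {t : ℝ | ∃ u : H, u ≠ 0 ∧ t = ⟪A u, u⟫ / ⟪B (D u), D u⟫} := by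
        refine ⟨M, ?_⟩
        rintro t ⟨u, hu, rfl⟩
        exact le_trans (hle1 u hu) (hq1le u hu)
      first
      | { -- sInf case
          apply le_antisymm
          · apply le_csInf hne2
            rintro t ⟨u, hu, rfl⟩
            obtain ⟨v, hv, hle⟩ := hle3 u hu
            exact le_trans (csInf_le hbdd1b ⟨v, hv, rfl⟩) hle
          · apply le_csInf hne1
            rintro t ⟨u, hu, rfl⟩
            exact le_trans (csInf_le hbdd2b ⟨u, hu, rfl⟩) (hle1 u hu) }
      | { -- sSup case
          apply le_antisymm
          · apply csSup_le hne1
            rintro t ⟨u, hu, rfl⟩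
            obtain ⟨v, hv, hle⟩ := hle2 u hu
            exact le_trans hle (le_csSup hbdd2a ⟨v, hv, rfl⟩)
          · apply csSup_le hne2
            rintro t ⟨u, hu, rfl⟩
            exact le_trans (hle1 u hu) (le_csSup hbdd1a ⟨u, hu, rfl⟩) }
  }
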